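/- Let X be any set of three points in generic position in P^1 × P^1 × P^1. Then the multigraded piece (I_X)_{(1,1,1)} (of dimension 8 − 3 = 5) is not equal to R_{e_1}(I_X)_{(0,1,1)} + R_{e_2}(I_X)_{(1,0,1)} + R_{e_3}(I_X)_{(1,1,0)}; in fact dim_k(R_{e_1}(I_X)_{(0,1,1)} + R_{e_2}(I_X)_{(1,0,1)} + R_{e_3}(I_X)_{(1,1,0)}) ≤ 4. Consequently I_X has a minimal generator in degree (1,1,1). -/

import Mathlib

open MvPolynomial

namespace MultiProjPoints

/-- The variable set of the multigraded coordinate ring of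
`ℙ^{n 0} × ⋯ × ℙ^{n (k-1)}`: variables `x_{i,j}` with `i : Fin k`, `0 ≤ j ≤ n i`. -/
abbrev Var (k : ℕ) (n : Fin k → ℕ) := Σ i : Fin k, Fin (n i + 1)

/-- The `ℕ^k`-grading weight: `deg x_{i,j} = e_i`. -/
def wt (k : ℕ) (n : Fin k → ℕ) : Var k n → (Fin k → ℕ) := fun v => Pi.single v.1 1

/-- The `i`-th standard basis vector of `ℕ^k`. -/
def e {k : ℕ} (l : Fin k) : Fin k → ℕ := Pi.single l 1

variable (K : Type) [Field K]

/-- The graded piece `R_d` of the `ℕ^k`-graded polynomial ring. -/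
noncomputable def piece (k : ℕ) (n : Fin k → ℕ) (d : Fin k → ℕ) :
    Submodule K (MvPolynomial (Var k n) K) :=
  weightedHomogeneousSubmodule K (wt k n) d

/-- `N(d) = ∏ binom (n i + d i) (d i)`, the dimension of `R_d`. -/
def NN (k : ℕ) (n : Fin k → ℕ) (d : Fin k → ℕ) : ℕ := ∏ i, (n i + d i).choose (d i)

/-- A (representative of a) point of `ℙ^{n 0} × ⋯ × ℙ^{n (k-1)}`. -/
def PointRep (k : ℕ) (n : Fin k → ℕ) := (i : Fin k) → Fin (n i + 1) → K

/-- A valid representative: every coordinate block is nonzero. -/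
def IsRep {k : ℕ} {n : Fin k → ℕ} (P : PointRep K k n) : Prop := ∀ i, P i ≠ 0

/-- Two representatives define the same point of multi-projective space. -/
def ProjEq {k : ℕ} {n : Fin k → ℕ} (P Q : PointRep K k n) : Prop :=
  ∀ i, ∃ c : K, c ≠ 0 ∧ P i = c • Q i

/-- A tuple of representatives giving `s` distinct points. -/
def SPoints {k : ℕ} {n : Fin k → ℕ} {s : ℕ} (P : Fin s → PointRep K k n) : Prop :=
  (∀ a, IsRep K (P a)) ∧ ∀ a b, a ≠ b → ¬ ProjEq K (P a) (P b)

/-- The defining ideal `I_X` of the set of points: all polynomials vanishing on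
the multi-cone over the points, i.e. the intersection of the point ideals. -/
noncomputable def idealOfPoints {k : ℕ} {n : Fin k → ℕ} {s : ℕ}
    (P : Fin s → PointRep K k n) : Ideal (MvPolynomial (Var k n) K) :=
  ⨅ (a : Fin s), ⨅ (c : Fin k → K),
    RingHom.ker (eval (fun v : Var k n => c v.1 * P a v.1 v.2))

/-- The degree-`d` piece `I_d` of an ideal, as a `K`-subspace. -/
noncomputable def idealPiece {k : ℕ} {n : Fin k → ℕ}
    (I : Ideal (MvPolynomial (Var k n) K)) (d : Fin k → ℕ) :
    Submodule K (MvPolynomial (Var k n) K) :=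
  (Submodule.restrictScalars K I) ⊓ piece K k n d

/-- The multigraded Hilbert function of `X`:
`H_X(d) = dim (R/I_X)_d = dim R_d - dim (I_X)_d`. -/
noncomputable def hilbert {k : ℕ} {n : Fin k → ℕ} {s : ℕ}
    (P : Fin s → PointRep K k n) (d : Fin k → ℕ) : ℕ :=
  NN k n d - Module.finrank K (idealPiece K (idealOfPoints K P) d)

/-- Generic position: `s` distinct points whose Hilbert function is maximal. -/
def GenericPosition {k : ℕ} {n : Fin k → ℕ} {s : ℕ} (P : Fin s → PointRep K k n) : Prop :=
  SPoints K P ∧ ∀ d : Fin k → ℕ, hilbert K P d = min (NN k n d) s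

/-- `R_{e_l}·V`: the span of all products of a variable of degree `e_l`
with an element of `V`. -/
noncomputable def mulSpan {k : ℕ} {n : Fin k → ℕ} (l : Fin k)
    (V : Submodule K (MvPolynomial (Var k n) K)) :
    Submodule K (MvPolynomial (Var k n) K) :=
  Submodule.span K {g | ∃ (m : Fin (n l + 1)) (f : MvPolynomial (Var k n) K),
    f ∈ V ∧ g = X (⟨l, m⟩ : Var k n) * f}

/-- `D = min { i ∈ ℕ^k | N(i) > s }` (minimal elements for the componentwise order). -/
def Dset (k : ℕ) (n : Fin k → ℕ) (s : ℕ) : Set (Fin k → ℕ) :=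
  {i | s < NN k n i ∧ ∀ j : Fin k → ℕ, s < NN k n j → j ≤ i → j = i}

/-- The irrelevant maximal ideal of `R`, generated by all the variables. -/
noncomputable def irrelevant (k : ℕ) (n : Fin k → ℕ) : Ideal (MvPolynomial (Var k n) K) :=
  Ideal.span (Set.range (X : Var k n → MvPolynomial (Var k n) K))

/-! ### Auxiliary material for the proof -/

section Aux

variable {K}

lemma single_weight_prod (c : Fin 3 → K) (v : Var 3 (fun _ => 1)) (t : ℕ) :
    (∏ i, c i ^ ((t • wt 3 (fun _ => 1) v) i)) = c v.1 ^ t := by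
  obtain ⟨i, j⟩ := v
  fin_cases i <;> simp [wt, Fin.prod_univ_three, Pi.single_apply]

lemma prod_pow_weight (c : Fin 3 → K) (m : Var 3 (fun _ => 1) →₀ ℕ) :
    (m.prod fun v t => c v.1 ^ t) =
      ∏ i, c i ^ (Finsupp.weight (wt 3 (fun _ => 1)) m i) := by
  induction m using Finsupp.induction with
  | zero => simp
  | single_add v t s hv ht ih =>
    rw [Finsupp.prod_add_index' (fun _ => pow_zero _) (fun _ _ _ => pow_add _ _ _),
      Finsupp.prod_single_index (h := fun (w : Var 3 (fun _ => 1)) t => c w.1 ^ t) (pow_zero _),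
      map_add, ih]
    have hw : Finsupp.weight (wt 3 (fun _ => 1)) (Finsupp.single v t)
        = t • wt 3 (fun _ => 1) v := by
      rw [Finsupp.weight_apply, Finsupp.sum_single_index]; simp
    rw [hw, ← single_weight_prod c v t, ← Finset.prod_mul_distrib]
    exact Finset.prod_congr rfl fun i _ => by rw [Pi.add_apply, pow_add]

lemma eval_scale {d : Fin 3 → ℕ} {f : MvPolynomial (Var 3 (fun _ => 1)) K}
    (hf : f ∈ piece K 3 (fun _ => 1) d) (c : Fin 3 → K) (x : Var 3 (fun _ => 1) → K) :
    eval (fun v => c v.1 * x v) f = (∏ i, c i ^ d i) * eval x f := by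
  conv_lhs => rw [← support_sum_monomial_coeff f]
  conv_rhs => rw [← support_sum_monomial_coeff f]
  rw [map_sum, map_sum, Finset.mul_sum]
  refine Finset.sum_congr rfl fun m hm => ?_
  have hd : Finsupp.weight (wt 3 (fun _ => 1)) m = d := hf (mem_support_iff.mp hm)
  rw [eval_monomial, eval_monomial]
  have h1 : (m.prod fun v t => (c v.1 * x v) ^ t)
      = (m.prod fun v t => c v.1 ^ t) * m.prod fun v t => x v ^ t := by
    rw [Finsupp.prod, Finsupp.prod, Finsupp.prod, ← Finset.prod_mul_distrib]
    exact Finset.prod_congr rfl fun v _ => mul_pow _ _ _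
  rw [h1, prod_pow_weight, hd]; ring

lemma weight_sum_components (m : Var 3 (fun _ => 1) →₀ ℕ) :
    (m.sum fun _ t => t) = Finsupp.weight (wt 3 (fun _ => 1)) m 0
      + Finsupp.weight (wt 3 (fun _ => 1)) m 1 + Finsupp.weight (wt 3 (fun _ => 1)) m 2 := by
  induction m using Finsupp.induction with
  | zero => simp
  | single_add v t s hv ht ih =>
    rw [Finsupp.sum_add_index' (fun _ => rfl) (fun _ _ _ => rfl),
      Finsupp.sum_single_index (h := fun (_ : Var 3 (fun _ => 1)) t => t) rfl, map_add, ih]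
    have hw : Finsupp.weight (wt 3 (fun _ => 1)) (Finsupp.single v t)
        = t • wt 3 (fun _ => 1) v := by
      rw [Finsupp.weight_apply, Finsupp.sum_single_index]; simp
    obtain ⟨i, j⟩ := v
    rw [hw]
    fin_cases i <;> simp [wt, Pi.single_apply] <;> ring

lemma piece_le_restrict (d : Fin 3 → ℕ) :
    piece K 3 (fun _ => 1) d ≤ restrictTotalDegree (Var 3 (fun _ => 1)) K (d 0 + d 1 + d 2) := by
  intro f hf
  rw [mem_restrictTotalDegree]
  apply Finset.sup_le
  intro m hm
  have hd : Finsupp.weight (wt 3 (fun _ => 1)) m = d := hf (mem_support_iff.mp hm)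
  have := weight_sum_components m
  rw [hd] at this
  simp only [Finsupp.sum] at this ⊢
  omega

instance pieceFD (d : Fin 3 → ℕ) : FiniteDimensional K (piece K 3 (fun _ => 1) d) :=
  Submodule.finiteDimensional_of_le (piece_le_restrict d)

instance idealPieceFD (I : Ideal (MvPolynomial (Var 3 (fun _ => 1)) K)) (d : Fin 3 → ℕ) :
    FiniteDimensional K (idealPiece K I d) :=
  Submodule.finiteDimensional_of_le (inf_le_right : _ ≤ piece K 3 (fun _ => 1) d)

/-- A polynomial with a nonzero evaluation is nonzero. -/
lemma ne_zero_of_eval_ne {x : Var 3 (fun _ => 1) → K} {f : MvPolynomial (Var 3 (fun _ => 1)) K}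
    (h : eval x f ≠ 0) : f ≠ 0 := fun h0 => h (by rw [h0, map_zero])

/-- The bracket (2×2 determinant) of two vectors in `K²`. -/
def br (p q : Fin 2 → K) : K := p 0 * q 1 - p 1 * q 0

lemma br_self (p : Fin 2 → K) : br p p = 0 := by simp [br, mul_comm]

lemma br_swap (p q : Fin 2 → K) : br p q = -br q p := by simp only [br]; ring

/-- The linear form in the `i`-th block of variables vanishing on the vector `u`. -/
noncomputable def Lf (i : Fin 3) (u : Fin 2 → K) : MvPolynomial (Var 3 (fun _ => 1)) K :=
  u 1 • X ⟨i, 0⟩ - u 0 • X ⟨i, 1⟩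

lemma eval_Lf (p : Fin 3 → Fin 2 → K) (i : Fin 3) (u : Fin 2 → K) :
    eval (fun v : Var 3 (fun _ => 1) => p v.1 v.2) (Lf i u) = br (p i) u := by
  simp [Lf, br, smul_eval]; ring

lemma eval_LfP (p : PointRep K 3 (fun _ => 1)) (i : Fin 3) (u : Fin 2 → K) :
    eval (fun v : Var 3 (fun _ => 1) => p v.1 v.2) (Lf i u) = br (p i) u :=
  eval_Lf p i u

lemma Lf_mem (i : Fin 3) (u : Fin 2 → K) : Lf i u ∈ piece K 3 (fun _ => 1) (e i) := by
  apply Submodule.sub_mem <;> apply Submodule.smul_mem <;>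
    exact isWeightedHomogeneous_X K _ _

lemma Lf_ne_zero {i : Fin 3} {u : Fin 2 → K} (hu : u ≠ 0) : Lf i u ≠ 0 := by
  obtain ⟨j, hj⟩ := Function.ne_iff.mp hu
  have hj' : u j ≠ 0 := by simpa using hj
  have hc2 : ∀ x : Fin 2, x = 0 ∨ x = 1 := by decide
  rcases hc2 j with rfl | rfl
  · refine ne_zero_of_eval_ne (x := fun v => (fun _ : Fin 3 => ![(0:K), 1]) v.1 v.2) ?_
    rw [eval_Lf (fun _ : Fin 3 => ![(0:K), 1]) i u]
    simp only [br]
    simpa using hj'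
  · refine ne_zero_of_eval_ne (x := fun v => (fun _ : Fin 3 => ![(1:K), 0]) v.1 v.2) ?_
    rw [eval_Lf (fun _ : Fin 3 => ![(1:K), 0]) i u]
    simp only [br]
    simpa using hj'

/-- The point `p₄` used to cut out the span of products. -/
noncomputable def P4 (P : Fin 3 → PointRep K 3 (fun _ => 1)) : Fin 3 → Fin 2 → K :=
  fun i j => 2 * (br (P 0 i) (P 1 i) * br (P 0 i) (P 2 i)) * P 2 i j
    + (br (P 2 i) (P 0 i) * br (P 2 i) (P 1 i)) * P 0 i j

lemma br_P4_0 (P : Fin 3 → PointRep K 3 (fun _ => 1)) (i : Fin 3) :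
    br (P4 P i) (P 0 i) = -(2 * br (P 0 i) (P 1 i) * br (P 0 i) (P 2 i) ^ 2) := by
  simp only [br, P4]; ring

lemma br_P4_1 (P : Fin 3 → PointRep K 3 (fun _ => 1)) (i : Fin 3) :
    br (P4 P i) (P 1 i) = -(br (P 0 i) (P 1 i) * br (P 0 i) (P 2 i) * br (P 1 i) (P 2 i)) := by
  simp only [br, P4]; ring

lemma br_P4_2 (P : Fin 3 → PointRep K 3 (fun _ => 1)) (i : Fin 3) :
    br (P4 P i) (P 2 i) = br (P 0 i) (P 2 i) ^ 2 * br (P 1 i) (P 2 i) := by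
  simp only [br, P4]; ring

/-- The bilinear forms `Q₁, Q₂, Q₃` through the three points. -/
noncomputable def q1 (P : Fin 3 → PointRep K 3 (fun _ => 1)) :
    MvPolynomial (Var 3 (fun _ => 1)) K :=
  (br (P 0 1) (P 2 1) * br (P 0 2) (P 1 2)) • (Lf 1 (P 1 1) * Lf 2 (P 2 2))
    - (br (P 0 1) (P 1 1) * br (P 0 2) (P 2 2)) • (Lf 1 (P 2 1) * Lf 2 (P 1 2))

noncomputable def q2 (P : Fin 3 → PointRep K 3 (fun _ => 1)) :
    MvPolynomial (Var 3 (fun _ => 1)) K :=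
  (br (P 0 0) (P 2 0) * br (P 0 2) (P 1 2)) • (Lf 0 (P 1 0) * Lf 2 (P 2 2))
    - (br (P 0 0) (P 1 0) * br (P 0 2) (P 2 2)) • (Lf 0 (P 2 0) * Lf 2 (P 1 2))

noncomputable def q3 (P : Fin 3 → PointRep K 3 (fun _ => 1)) :
    MvPolynomial (Var 3 (fun _ => 1)) K :=
  (br (P 0 0) (P 2 0) * br (P 0 1) (P 1 1)) • (Lf 0 (P 1 0) * Lf 1 (P 2 1))
    - (br (P 0 0) (P 1 0) * br (P 0 1) (P 2 1)) • (Lf 0 (P 2 0) * Lf 1 (P 1 1))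

/-- Membership in a graded piece of the ideal of the points, for homogeneous `f`. -/
lemma mem_idealPiece_iff (P : Fin 3 → PointRep K 3 (fun _ => 1)) {d : Fin 3 → ℕ}
    {f : MvPolynomial (Var 3 (fun _ => 1)) K} (hf : f ∈ piece K 3 (fun _ => 1) d) :
    f ∈ idealPiece K (idealOfPoints K P) d ↔
      ∀ a : Fin 3, eval (fun v : Var 3 (fun _ => 1) => P a v.1 v.2) f = 0 := by
  have hI : f ∈ idealOfPoints K P ↔ ∀ (a : Fin 3) (c : Fin 3 → K),
      eval (fun v : Var 3 (fun _ => 1) => c v.1 * P a v.1 v.2) f = 0 := by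
    simp only [idealOfPoints, Submodule.mem_iInf, RingHom.mem_ker]
  simp only [idealPiece, Submodule.mem_inf, Submodule.restrictScalars_mem]
  constructor
  · intro h a
    have h2 := (hI.mp h.1) a (fun _ => 1)
    simpa using h2
  · intro h
    refine ⟨hI.mpr fun a c => ?_, hf⟩
    have := eval_scale hf c (fun v => P a v.1 v.2)
    rw [this, h a, mul_zero]

end Aux

theorem three_points_new_generator (K : Type) [Field K] [IsAlgClosed K] [CharZero K]
    (P : Fin 3 → PointRep K 3 (fun _ => 1)) (hgen : GenericPosition K P) :
    -- `(I_X)_{(1,1,1)}` has dimension `8 - 3 = 5`,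
    Module.finrank K (idealPiece K (idealOfPoints K P) ![1, 1, 1]) = 5 ∧
    -- the span of products of lower-degree pieces with linear forms has dimension `≤ 4`,
    Module.finrank K
        ((mulSpan K 0 (idealPiece K (idealOfPoints K P) ![0, 1, 1])
            ⊔ mulSpan K 1 (idealPiece K (idealOfPoints K P) ![1, 0, 1])
            ⊔ mulSpan K 2 (idealPiece K (idealOfPoints K P) ![1, 1, 0]) :
          Submodule K (MvPolynomial (Var 3 (fun _ => 1)) K))) ≤ 4 ∧
    -- in particular it is a proper subspace of `(I_X)_{(1,1,1)}`,
    (mulSpan K 0 (idealPiece K (idealOfPoints K P) ![0, 1, 1])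
        ⊔ mulSpan K 1 (idealPiece K (idealOfPoints K P) ![1, 0, 1])
        ⊔ mulSpan K 2 (idealPiece K (idealOfPoints K P) ![1, 1, 0]))
      ≠ idealPiece K (idealOfPoints K P) ![1, 1, 1] ∧
    -- and consequently `I_X` has a minimal generator of degree `(1,1,1)`
    ∃ f ∈ idealPiece K (idealOfPoints K P) ![1, 1, 1],
      f ∉ Ideal.span (⋃ d ∈ {d : Fin 3 → ℕ | d ≤ ![1, 1, 1] ∧ d ≠ ![1, 1, 1]},
        (idealPiece K (idealOfPoints K P) d : Set (MvPolynomial (Var 3 (fun _ => 1)) K))) := by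
  classical
  have hdim : ∀ d : Fin 3 → ℕ, 0 < NN 3 (fun _ => 1) d →
      Module.finrank K (idealPiece K (idealOfPoints K P) d)
        = NN 3 (fun _ => 1) d - min (NN 3 (fun _ => 1) d) 3 := by
    intro d hpos
    have h := hgen.2 d
    simp only [hilbert] at h
    have h1 : min (NN 3 (fun _ => 1) d) 3 ≤ NN 3 (fun _ => 1) d := min_le_left _ _
    have h2 : 0 < min (NN 3 (fun _ => 1) d) 3 := lt_min hpos (by norm_num)
    omega
  have hcov3 : ∀ x : Fin 3, x = 0 ∨ x = 1 ∨ x = 2 := by decide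
  -- part 1
  have h111 : Module.finrank K (idealPiece K (idealOfPoints K P) ![1, 1, 1]) = 5 := by
    rw [hdim ![1, 1, 1] (by decide)]; decide
  -- all brackets between distinct points are nonzero
  have hth : ∀ a b : Fin 3, a ≠ b →
      (-(a + b) ≠ a ∧ -(a + b) ≠ b ∧ ∀ x, (x = a ∨ x = b ∨ x = -(a + b))) := by decide
  have hbrne : ∀ (i a b : Fin 3), a ≠ b → br (P a i) (P b i) ≠ 0 := by
    intro i a b hab h0
    obtain ⟨hca, hcb, hcov⟩ := hth a b hab
    have hmem : Lf i (P a i) * Lf i (P (-(a + b)) i) ∈ piece K 3 (fun _ => 1) (e i + e i) :=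
      weightedHomogeneousSubmodule_mul _ _ _
        (Submodule.mul_mem_mul (Lf_mem i _) (Lf_mem i _))
    have hvan : ∀ a' : Fin 3, eval (fun v : Var 3 (fun _ => 1) => P a' v.1 v.2)
        (Lf i (P a i) * Lf i (P (-(a + b)) i)) = 0 := by
      intro a'
      rw [map_mul, eval_LfP, eval_LfP]
      rcases hcov a' with rfl | rfl | rfl
      · rw [br_self, zero_mul]
      · have hz : br (P a' i) (P a i) = 0 := by rw [br_swap, h0, neg_zero]
        rw [hz, zero_mul]
      · rw [br_self, mul_zero]
    have hmem2 := (mem_idealPiece_iff P hmem).mpr hvan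
    have h0dim : Module.finrank K (idealPiece K (idealOfPoints K P) (e i + e i)) = 0 := by
      rw [hdim (e i + e i) (by rcases hcov3 i with rfl | rfl | rfl <;> decide)]
      rcases hcov3 i with rfl | rfl | rfl <;> decide
    have hbot := Submodule.finrank_eq_zero.mp h0dim
    rw [hbot, Submodule.mem_bot] at hmem2
    exact mul_ne_zero (Lf_ne_zero (hgen.1.1 a i)) (Lf_ne_zero (hgen.1.1 _ i)) hmem2
  -- degree bookkeeping
  have hd011 : (e 1 + e 2 : Fin 3 → ℕ) = ![0, 1, 1] := by funext i; fin_cases i <;> simp [e]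
  have hd101 : (e 0 + e 2 : Fin 3 → ℕ) = ![1, 0, 1] := by funext i; fin_cases i <;> simp [e]
  have hd110 : (e 0 + e 1 : Fin 3 → ℕ) = ![1, 1, 0] := by funext i; fin_cases i <;> simp [e]
  -- q1
  have hq1p : q1 P ∈ piece K 3 (fun _ => 1) ![0, 1, 1] := by
    rw [← hd011]
    exact Submodule.sub_mem _
      (Submodule.smul_mem _ _ (weightedHomogeneousSubmodule_mul _ _ _
        (Submodule.mul_mem_mul (Lf_mem 1 _) (Lf_mem 2 _))))
      (Submodule.smul_mem _ _ (weightedHomogeneousSubmodule_mul _ _ _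
        (Submodule.mul_mem_mul (Lf_mem 1 _) (Lf_mem 2 _))))
  have hq1m : q1 P ∈ idealPiece K (idealOfPoints K P) ![0, 1, 1] := by
    refine (mem_idealPiece_iff P hq1p).mpr fun a => ?_
    rcases hcov3 a with rfl | rfl | rfl <;>
      · simp only [q1, map_sub, smul_eval, map_mul, eval_LfP, br]
        ring
  have hq1ne : q1 P ≠ 0 := by
    refine ne_zero_of_eval_ne
      (x := fun v => (![P 0 0, P 2 1, P 1 2] : Fin 3 → Fin 2 → K) v.1 v.2) ?_
    have hval : eval (fun v : Var 3 (fun _ => 1) =>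
          (![P 0 0, P 2 1, P 1 2] : Fin 3 → Fin 2 → K) v.1 v.2) (q1 P)
        = br (P 0 1) (P 2 1) * br (P 0 2) (P 1 2)
          * (br (P 2 1) (P 1 1) * br (P 1 2) (P 2 2)) := by
      simp only [q1, map_sub, smul_eval, map_mul,
        eval_Lf (![P 0 0, P 2 1, P 1 2] : Fin 3 → Fin 2 → K),
        Matrix.cons_val_zero, Matrix.cons_val_one, Matrix.cons_val_two,
        Matrix.head_cons, Matrix.tail_cons, br_self, zero_mul, mul_zero, sub_zero]
    rw [hval]
    exact mul_ne_zero (mul_ne_zero (hbrne 1 0 2 (by decide)) (hbrne 2 0 1 (by decide)))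
      (mul_ne_zero (hbrne 1 2 1 (by decide)) (hbrne 2 1 2 (by decide)))
  have hsp1 : idealPiece K (idealOfPoints K P) ![0, 1, 1] = Submodule.span K {q1 P} := by
    refine (Submodule.eq_of_le_of_finrank_le
      (Submodule.span_le.mpr (Set.singleton_subset_iff.mpr hq1m)) ?_).symm
    rw [finrank_span_singleton hq1ne, hdim ![0, 1, 1] (by decide)]
    decide
  -- q2
  have hq2p : q2 P ∈ piece K 3 (fun _ => 1) ![1, 0, 1] := by
    rw [← hd101]
    exact Submodule.sub_mem _
      (Submodule.smul_mem _ _ (weightedHomogeneousSubmodule_mul _ _ _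
        (Submodule.mul_mem_mul (Lf_mem 0 _) (Lf_mem 2 _))))
      (Submodule.smul_mem _ _ (weightedHomogeneousSubmodule_mul _ _ _
        (Submodule.mul_mem_mul (Lf_mem 0 _) (Lf_mem 2 _))))
  have hq2m : q2 P ∈ idealPiece K (idealOfPoints K P) ![1, 0, 1] := by
    refine (mem_idealPiece_iff P hq2p).mpr fun a => ?_
    rcases hcov3 a with rfl | rfl | rfl <;>
      · simp only [q2, map_sub, smul_eval, map_mul, eval_LfP, br]
        ring
  have hq2ne : q2 P ≠ 0 := by
    refine ne_zero_of_eval_ne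
      (x := fun v => (![P 2 0, P 0 1, P 1 2] : Fin 3 → Fin 2 → K) v.1 v.2) ?_
    have hval : eval (fun v : Var 3 (fun _ => 1) =>
          (![P 2 0, P 0 1, P 1 2] : Fin 3 → Fin 2 → K) v.1 v.2) (q2 P)
        = br (P 0 0) (P 2 0) * br (P 0 2) (P 1 2)
          * (br (P 2 0) (P 1 0) * br (P 1 2) (P 2 2)) := by
      simp only [q2, map_sub, smul_eval, map_mul,
        eval_Lf (![P 2 0, P 0 1, P 1 2] : Fin 3 → Fin 2 → K),
        Matrix.cons_val_zero, Matrix.cons_val_one, Matrix.cons_val_two,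
        Matrix.head_cons, Matrix.tail_cons, br_self, zero_mul, mul_zero, sub_zero]
    rw [hval]
    exact mul_ne_zero (mul_ne_zero (hbrne 0 0 2 (by decide)) (hbrne 2 0 1 (by decide)))
      (mul_ne_zero (hbrne 0 2 1 (by decide)) (hbrne 2 1 2 (by decide)))
  have hsp2 : idealPiece K (idealOfPoints K P) ![1, 0, 1] = Submodule.span K {q2 P} := by
    refine (Submodule.eq_of_le_of_finrank_le
      (Submodule.span_le.mpr (Set.singleton_subset_iff.mpr hq2m)) ?_).symm
    rw [finrank_span_singleton hq2ne, hdim ![1, 0, 1] (by decide)]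
    decide
  -- q3
  have hq3p : q3 P ∈ piece K 3 (fun _ => 1) ![1, 1, 0] := by
    rw [← hd110]
    exact Submodule.sub_mem _
      (Submodule.smul_mem _ _ (weightedHomogeneousSubmodule_mul _ _ _
        (Submodule.mul_mem_mul (Lf_mem 0 _) (Lf_mem 1 _))))
      (Submodule.smul_mem _ _ (weightedHomogeneousSubmodule_mul _ _ _
        (Submodule.mul_mem_mul (Lf_mem 0 _) (Lf_mem 1 _))))
  have hq3m : q3 P ∈ idealPiece K (idealOfPoints K P) ![1, 1, 0] := by
    refine (mem_idealPiece_iff P hq3p).mpr fun a => ?_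
    rcases hcov3 a with rfl | rfl | rfl <;>
      · simp only [q3, map_sub, smul_eval, map_mul, eval_LfP, br]
        ring
  have hq3ne : q3 P ≠ 0 := by
    refine ne_zero_of_eval_ne
      (x := fun v => (![P 2 0, P 1 1, P 0 2] : Fin 3 → Fin 2 → K) v.1 v.2) ?_
    have hval : eval (fun v : Var 3 (fun _ => 1) =>
          (![P 2 0, P 1 1, P 0 2] : Fin 3 → Fin 2 → K) v.1 v.2) (q3 P)
        = br (P 0 0) (P 2 0) * br (P 0 1) (P 1 1)
          * (br (P 2 0) (P 1 0) * br (P 1 1) (P 2 1)) := by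
      simp only [q3, map_sub, smul_eval, map_mul,
        eval_Lf (![P 2 0, P 1 1, P 0 2] : Fin 3 → Fin 2 → K),
        Matrix.cons_val_zero, Matrix.cons_val_one, Matrix.cons_val_two,
        Matrix.head_cons, Matrix.tail_cons, br_self, zero_mul, mul_zero, sub_zero]
    rw [hval]
    exact mul_ne_zero (mul_ne_zero (hbrne 0 0 2 (by decide)) (hbrne 1 0 1 (by decide)))
      (mul_ne_zero (hbrne 0 2 1 (by decide)) (hbrne 1 1 2 (by decide)))
  have hsp3 : idealPiece K (idealOfPoints K P) ![1, 1, 0] = Submodule.span K {q3 P} := by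
    refine (Submodule.eq_of_le_of_finrank_le
      (Submodule.span_le.mpr (Set.singleton_subset_iff.mpr hq3m)) ?_).symm
    rw [finrank_span_singleton hq3ne, hdim ![1, 1, 0] (by decide)]
    decide
  -- the evaluation at the fourth point kills the three quadrics
  have hεq1 : eval (fun v : Var 3 (fun _ => 1) => P4 P v.1 v.2) (q1 P) = 0 := by
    simp only [q1, map_sub, smul_eval, map_mul, eval_Lf (P4 P), br_P4_1, br_P4_2]
    ring
  have hεq2 : eval (fun v : Var 3 (fun _ => 1) => P4 P v.1 v.2) (q2 P) = 0 := by
    simp only [q2, map_sub, smul_eval, map_mul, eval_Lf (P4 P), br_P4_1, br_P4_2]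
    ring
  have hεq3 : eval (fun v : Var 3 (fun _ => 1) => P4 P v.1 v.2) (q3 P) = 0 := by
    simp only [q3, map_sub, smul_eval, map_mul, eval_Lf (P4 P), br_P4_1, br_P4_2]
    ring
  -- the witness cubic g
  have hd111 : (e 0 + e 1 + e 2 : Fin 3 → ℕ) = ![1, 1, 1] := by
    funext i; fin_cases i <;> simp [e]
  have hgp : Lf 0 (P 0 0) * Lf 1 (P 1 1) * Lf 2 (P 2 2)
      ∈ piece K 3 (fun _ => 1) ![1, 1, 1] := by
    rw [← hd111]
    exact weightedHomogeneousSubmodule_mul _ _ _ (Submodule.mul_mem_mul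
      (weightedHomogeneousSubmodule_mul _ _ _
        (Submodule.mul_mem_mul (Lf_mem 0 _) (Lf_mem 1 _))) (Lf_mem 2 _))
  have hgm : Lf 0 (P 0 0) * Lf 1 (P 1 1) * Lf 2 (P 2 2)
      ∈ idealPiece K (idealOfPoints K P) ![1, 1, 1] := by
    refine (mem_idealPiece_iff P hgp).mpr fun a => ?_
    rcases hcov3 a with rfl | rfl | rfl <;>
      · simp only [map_mul, eval_LfP, br]
        ring
  have hεg : eval (fun v : Var 3 (fun _ => 1) => P4 P v.1 v.2)
      (Lf 0 (P 0 0) * Lf 1 (P 1 1) * Lf 2 (P 2 2)) ≠ 0 := by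
    rw [map_mul, map_mul, eval_Lf (P4 P), eval_Lf (P4 P), eval_Lf (P4 P),
      br_P4_0, br_P4_1, br_P4_2]
    refine mul_ne_zero (mul_ne_zero ?_ ?_) ?_
    · exact neg_ne_zero.mpr (mul_ne_zero (mul_ne_zero (by norm_num : (2 : K) ≠ 0)
        (hbrne 0 0 1 (by decide))) (pow_ne_zero 2 (hbrne 0 0 2 (by decide))))
    · exact neg_ne_zero.mpr (mul_ne_zero (mul_ne_zero (hbrne 1 0 1 (by decide))
        (hbrne 1 0 2 (by decide))) (hbrne 1 1 2 (by decide)))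
    · exact mul_ne_zero (pow_ne_zero 2 (hbrne 2 0 2 (by decide))) (hbrne 2 1 2 (by decide))
  -- the linear functional and the subspace U
  let εl : MvPolynomial (Var 3 (fun _ => 1)) K →ₗ[K] K :=
    (aeval (fun v : Var 3 (fun _ => 1) => P4 P v.1 v.2) :
      MvPolynomial (Var 3 (fun _ => 1)) K →ₐ[K] K).toLinearMap
  have hεl_apply : ∀ f, εl f = eval (fun v : Var 3 (fun _ => 1) => P4 P v.1 v.2) f :=
    fun f => rfl
  let εF := εl.domRestrict (idealPiece K (idealOfPoints K P) ![1, 1, 1])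
  have hrange : LinearMap.range εF = ⊤ := by
    rw [LinearMap.range_eq_top]
    intro cval
    refine ⟨(cval / eval (fun v : Var 3 (fun _ => 1) => P4 P v.1 v.2)
      (Lf 0 (P 0 0) * Lf 1 (P 1 1) * Lf 2 (P 2 2))) • ⟨_, hgm⟩, ?_⟩
    rw [map_smul, LinearMap.domRestrict_apply, hεl_apply]
    rw [smul_eq_mul]
    exact div_mul_cancel₀ cval hεg
  have hker4 : Module.finrank K (LinearMap.ker εF) = 4 := by
    have h := LinearMap.finrank_range_add_finrank_ker εF
    rw [hrange, finrank_top, Module.finrank_self, h111] at h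
    omega
  set U := Submodule.map (idealPiece K (idealOfPoints K P) ![1, 1, 1]).subtype
    (LinearMap.ker εF) with hUdef
  have hU4 : Module.finrank K U = 4 := by
    rw [hUdef, Submodule.finrank_map_subtype_eq]; exact hker4
  have hmemU : ∀ f, f ∈ idealPiece K (idealOfPoints K P) ![1, 1, 1] →
      eval (fun v : Var 3 (fun _ => 1) => P4 P v.1 v.2) f = 0 → f ∈ U := by
    intro f hf h0
    exact Submodule.mem_map.mpr ⟨⟨f, hf⟩,
      by rw [LinearMap.mem_ker, LinearMap.domRestrict_apply, hεl_apply]; exact h0, rfl⟩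
  have hevU : ∀ f ∈ U, eval (fun v : Var 3 (fun _ => 1) => P4 P v.1 v.2) f = 0 := by
    rintro f ⟨⟨g', hg'⟩, hk, rfl⟩
    have hk2 := LinearMap.mem_ker.mp hk
    rw [LinearMap.domRestrict_apply, hεl_apply] at hk2
    simpa using hk2
  -- W ≤ U
  have key : ∀ (l : Fin 3) (dl : Fin 3 → ℕ) (q : MvPolynomial (Var 3 (fun _ => 1)) K),
      (e l + dl = ![1, 1, 1]) →
      idealPiece K (idealOfPoints K P) dl = Submodule.span K {q} →
      eval (fun v : Var 3 (fun _ => 1) => P4 P v.1 v.2) q = 0 →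
      mulSpan K l (idealPiece K (idealOfPoints K P) dl) ≤ U := by
    intro l dl q hdeg hspan hq0
    refine Submodule.span_le.mpr ?_
    rintro g ⟨m, f, hfV, rfl⟩
    have hfI : f ∈ idealOfPoints K P := (Submodule.mem_inf.mp hfV).1
    have hfp : f ∈ piece K 3 (fun _ => 1) dl := (Submodule.mem_inf.mp hfV).2
    obtain ⟨cc, rfl⟩ := Submodule.mem_span_singleton.mp (hspan ▸ hfV)
    refine hmemU _ ?_ ?_
    · refine Submodule.mem_inf.mpr ⟨?_, ?_⟩
      · exact Ideal.mul_mem_left _ _ hfI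
      · have hX : (X (⟨l, m⟩ : Var 3 (fun _ => 1)) : MvPolynomial (Var 3 (fun _ => 1)) K)
            ∈ piece K 3 (fun _ => 1) (e l) := isWeightedHomogeneous_X K _ _
        have hm := weightedHomogeneousSubmodule_mul (wt 3 (fun _ => 1)) (e l) dl
          (Submodule.mul_mem_mul hX hfp)
        rwa [hdeg] at hm
    · rw [map_mul, smul_eval, hq0, mul_zero, mul_zero]
  have hWU : mulSpan K 0 (idealPiece K (idealOfPoints K P) ![0, 1, 1])
      ⊔ mulSpan K 1 (idealPiece K (idealOfPoints K P) ![1, 0, 1])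
      ⊔ mulSpan K 2 (idealPiece K (idealOfPoints K P) ![1, 1, 0]) ≤ U := by
    refine sup_le (sup_le ?_ ?_) ?_
    · exact key 0 ![0, 1, 1] (q1 P) (by funext i; fin_cases i <;> simp [e]) hsp1 hεq1
    · exact key 1 ![1, 0, 1] (q2 P) (by funext i; fin_cases i <;> simp [e]) hsp2 hεq2
    · exact key 2 ![1, 1, 0] (q3 P) (by funext i; fin_cases i <;> simp [e]) hsp3 hεq3
  haveI : FiniteDimensional K U :=
    Submodule.finiteDimensional_of_le (Submodule.map_subtype_le _ _)
  have hW4 : Module.finrank K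
      ((mulSpan K 0 (idealPiece K (idealOfPoints K P) ![0, 1, 1])
          ⊔ mulSpan K 1 (idealPiece K (idealOfPoints K P) ![1, 0, 1])
          ⊔ mulSpan K 2 (idealPiece K (idealOfPoints K P) ![1, 1, 0]) :
        Submodule K (MvPolynomial (Var 3 (fun _ => 1)) K))) ≤ 4 :=
    le_trans (Submodule.finrank_mono hWU) (le_of_eq hU4)
  have hWne : (mulSpan K 0 (idealPiece K (idealOfPoints K P) ![0, 1, 1])
        ⊔ mulSpan K 1 (idealPiece K (idealOfPoints K P) ![1, 0, 1])
        ⊔ mulSpan K 2 (idealPiece K (idealOfPoints K P) ![1, 1, 0]))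
      ≠ idealPiece K (idealOfPoints K P) ![1, 1, 1] := by
    intro heq
    exact hεg (hevU _ (hWU (by rw [heq]; exact hgm)))
  refine ⟨h111, hW4, hWne, Lf 0 (P 0 0) * Lf 1 (P 1 1) * Lf 2 (P 2 2), hgm, ?_⟩
  intro hmem
  have hle : Ideal.span (⋃ d ∈ {d : Fin 3 → ℕ | d ≤ ![1, 1, 1] ∧ d ≠ ![1, 1, 1]},
        (idealPiece K (idealOfPoints K P) d : Set (MvPolynomial (Var 3 (fun _ => 1)) K)))
      ≤ RingHom.ker (eval (fun v : Var 3 (fun _ => 1) => P4 P v.1 v.2)) := by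
    rw [Ideal.span_le]
    rintro f hf
    simp only [Set.mem_iUnion, SetLike.mem_coe, exists_prop, Set.mem_setOf_eq] at hf
    obtain ⟨d, ⟨hdle, hdne⟩, hfd⟩ := hf
    have hd0 : d 0 ≤ 1 := by simpa using (Pi.le_def.mp hdle) 0
    have hd1 : d 1 ≤ 1 := by simpa using (Pi.le_def.mp hdle) 1
    have hd2 : d 2 ≤ 1 := by simpa using (Pi.le_def.mp hdle) 2
    have hdeq : d = ![d 0, d 1, d 2] := by
      funext i; fin_cases i <;> rfl
    have hzero : ∀ d' : Fin 3 → ℕ, 0 < NN 3 (fun _ => 1) d' →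
        NN 3 (fun _ => 1) d' - min (NN 3 (fun _ => 1) d') 3 = 0 →
        f ∈ idealPiece K (idealOfPoints K P) d' →
        eval (fun v : Var 3 (fun _ => 1) => P4 P v.1 v.2) f = 0 := by
      intro d' hp hz hfm
      have hbot : idealPiece K (idealOfPoints K P) d' = ⊥ :=
        Submodule.finrank_eq_zero.mp (by rw [hdim d' hp]; exact hz)
      rw [hbot, Submodule.mem_bot] at hfm
      rw [hfm, map_zero]
    have hspanc : ∀ (d' : Fin 3 → ℕ) (q : MvPolynomial (Var 3 (fun _ => 1)) K),
        idealPiece K (idealOfPoints K P) d' = Submodule.span K {q} →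
        eval (fun v : Var 3 (fun _ => 1) => P4 P v.1 v.2) q = 0 →
        f ∈ idealPiece K (idealOfPoints K P) d' →
        eval (fun v : Var 3 (fun _ => 1) => P4 P v.1 v.2) f = 0 := by
      intro d' q hs h0 hfm
      obtain ⟨cc, rfl⟩ := Submodule.mem_span_singleton.mp (hs ▸ hfm)
      rw [smul_eval, h0, mul_zero]
    rw [SetLike.mem_coe, RingHom.mem_ker]
    rw [hdeq] at hfd
    rcases Nat.le_one_iff_eq_zero_or_eq_one.mp hd0 with h0 | h0 <;>
      rcases Nat.le_one_iff_eq_zero_or_eq_one.mp hd1 with h1 | h1 <;>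
        rcases Nat.le_one_iff_eq_zero_or_eq_one.mp hd2 with h2 | h2 <;>
          rw [h0, h1, h2] at hfd
    · exact hzero ![0, 0, 0] (by decide) (by decide) hfd
    · exact hzero ![0, 0, 1] (by decide) (by decide) hfd
    · exact hzero ![0, 1, 0] (by decide) (by decide) hfd
    · exact hspanc ![0, 1, 1] (q1 P) hsp1 hεq1 hfd
    · exact hzero ![1, 0, 0] (by decide) (by decide) hfd
    · exact hspanc ![1, 0, 1] (q2 P) hsp2 hεq2 hfd
    · exact hspanc ![1, 1, 0] (q3 P) hsp3 hεq3 hfd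
    · exact absurd (hdeq.trans (by rw [h0, h1, h2])) hdne
  have hfin := hle hmem
  rw [RingHom.mem_ker] at hfin
  exact hεg hfin


end MultiProjPoints
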